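/- arXiv:1604.03787 — 3 statements merged into one kernel-verified Lean document; each statement's English description precedes it below -/
import Mathlib

section
/- For every integer n ≥ 0, every integer k, and every real x: E_{n,p,q}^{(k)}(x + 1) − E_{n,p,q}^{(k)}(x) = Σ_{i=0}^{n−1} binom(n,i) · E_{i,p,q}^{(k)}(x) (the right-hand side being the empty sum 0 when n = 0). -/
open Finset

/-- The `(p,q)`-integer `[m]_{p,q} = (p^m - q^m)/(p - q)`. -/
noncomputable def pqInt (p q : ℝ) (m : ℕ) : ℝ := (p ^ m - q ^ m) / (p - q)

/-- The exponential generating function `∑ f n * t^n / n!` of a sequence `f`. -/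
noncomputable def egf (f : ℕ → ℝ) : PowerSeries ℝ :=
  PowerSeries.mk fun n => f n / n.factorial

/-- Formal substitution of a power series `S` with zero constant term into the
`(p,q)`-polylogarithm `Li_{k,p,q}(s) = ∑_{m ≥ 1} s^m / [m]_{p,q}^k`.
(For `m > n` the series `S^m` has zero `n`-th coefficient, so the sum is finite.) -/
noncomputable def pqLi (p q : ℝ) (k : ℤ) (S : PowerSeries ℝ) : PowerSeries ℝ :=
  PowerSeries.mk fun n =>
    ∑ m ∈ Finset.Icc 1 n, PowerSeries.coeff (R := ℝ) n (S ^ m) / pqInt p q m ^ k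

theorem pqPolyEuler_succ_sub
    (p q : ℝ) (hq : 0 < q) (hqp : q < p) (hp : p ≤ 1) (k : ℤ)
    (E : ℝ → ℕ → ℝ)
    (hE : ∀ x : ℝ,
      2 * pqLi p q k (1 - PowerSeries.rescale (-1) (PowerSeries.exp ℝ)) *
          PowerSeries.rescale x (PowerSeries.exp ℝ) =
        (1 + PowerSeries.exp ℝ) * egf (E x)) :
    ∀ (n : ℕ) (x : ℝ),
      E (x + 1) n - E x n = ∑ i ∈ Finset.range n, (n.choose i : ℝ) * E x i := by
  intro n x
  have hne : (1 + PowerSeries.exp ℝ : PowerSeries ℝ) ≠ 0 := by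
    intro h
    have := congrArg (PowerSeries.constantCoeff (R := ℝ)) h
    simp [PowerSeries.constantCoeff_exp] at this
  have hres : PowerSeries.rescale (x + 1) (PowerSeries.exp ℝ) =
      PowerSeries.rescale x (PowerSeries.exp ℝ) * PowerSeries.exp ℝ := by
    rw [← PowerSeries.exp_mul_exp_eq_exp_add x 1, PowerSeries.rescale_one, RingHom.id_apply]
  have key : egf (E (x + 1)) = egf (E x) * PowerSeries.exp ℝ := by
    apply mul_left_cancel₀ hne
    calc (1 + PowerSeries.exp ℝ) * egf (E (x + 1))
        = 2 * pqLi p q k (1 - PowerSeries.rescale (-1) (PowerSeries.exp ℝ)) *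
            PowerSeries.rescale (x + 1) (PowerSeries.exp ℝ) := (hE (x + 1)).symm
      _ = 2 * pqLi p q k (1 - PowerSeries.rescale (-1) (PowerSeries.exp ℝ)) *
            PowerSeries.rescale x (PowerSeries.exp ℝ) * PowerSeries.exp ℝ := by
            rw [hres]; ring
      _ = (1 + PowerSeries.exp ℝ) * egf (E x) * PowerSeries.exp ℝ := by rw [hE x]
      _ = (1 + PowerSeries.exp ℝ) * (egf (E x) * PowerSeries.exp ℝ) := by ring
  have hc := congrArg (PowerSeries.coeff (R := ℝ) n) key
  rw [PowerSeries.coeff_mul] at hc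
  simp only [egf, PowerSeries.coeff_mk, PowerSeries.coeff_exp] at hc
  rw [Finset.Nat.sum_antidiagonal_eq_sum_range_succ_mk] at hc
  have hn : (n.factorial : ℝ) ≠ 0 := Nat.cast_ne_zero.mpr n.factorial_ne_zero
  have h2 : E (x + 1) n = ∑ i ∈ range (n + 1), (n.choose i : ℝ) * E x i := by
    rw [div_eq_iff hn] at hc
    rw [hc, Finset.sum_mul]
    refine Finset.sum_congr rfl fun i hi => ?_
    have hile : i ≤ n := Nat.lt_succ_iff.mp (Finset.mem_range.mp hi)
    rw [Nat.cast_choose ℝ hile]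
    have hi1 : (i.factorial : ℝ) ≠ 0 := Nat.cast_ne_zero.mpr i.factorial_ne_zero
    have hi2 : ((n - i).factorial : ℝ) ≠ 0 := Nat.cast_ne_zero.mpr (n - i).factorial_ne_zero
    have : (algebraMap ℚ ℝ) (1 / ((n - i).factorial : ℚ)) = 1 / ((n - i).factorial : ℝ) := by
      push_cast; simp
    rw [this]
    field_simp
  rw [Finset.sum_range_succ] at h2
  simp at h2
  linarith [h2]
end

section
/- For every integer n ≥ 1, every integer k, and every real x: E_{n,p,q}^{(k)}(x) = Σ_{l=0}^{n−1} (1/[l+1]_{p,q}^k) · Σ_{j=0}^{l+1} binom(l+1,j) · (−1)^j · E_n(x − j), where E_n denotes the classical Euler polynomial; moreover the summand in l vanishes for every l ≥ n (the (l+1)-st finite difference of a polynomial of degree n is zero), so the sum may equivalently be taken over all l ≥ 0. -/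
open Finset

/-- Auxiliary: the series `1 - e^{-t}`. -/
noncomputable def pqAuxS : PowerSeries ℝ := 1 - PowerSeries.rescale (-1) (PowerSeries.exp ℝ)

lemma pqAuxS_eq : pqAuxS = 1 - PowerSeries.rescale (-1) (PowerSeries.exp ℝ) := rfl

lemma pqAuxS_const : PowerSeries.constantCoeff (R := ℝ) pqAuxS = 0 := by
  rw [pqAuxS, map_sub, map_one, ← PowerSeries.coeff_zero_eq_constantCoeff_apply,
    PowerSeries.coeff_rescale, PowerSeries.coeff_exp]
  norm_num

lemma pqAuxS_pow_coeff (m i : ℕ) (h : i < m) : PowerSeries.coeff (R := ℝ) i (pqAuxS ^ m) = 0 := by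
  have : (PowerSeries.X : PowerSeries ℝ) ^ m ∣ pqAuxS ^ m :=
    pow_dvd_pow_of_dvd (PowerSeries.X_dvd_iff.mpr pqAuxS_const) m
  exact PowerSeries.X_pow_dvd_iff.mp this i h

open PowerSeries in
lemma pqAuxS_pow_mul (m : ℕ) (x : ℝ) :
    pqAuxS ^ m * (2 * rescale x (exp ℝ)) =
      ∑ j ∈ range (m + 1),
        PowerSeries.C (R := ℝ) ((m.choose j : ℝ) * (-1) ^ j) * (2 * rescale (x - j) (exp ℝ)) := by
  have h : pqAuxS = -(rescale (-1) (exp ℝ)) + 1 := by rw [pqAuxS]; ring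
  rw [h, add_pow, Finset.sum_mul]
  refine Finset.sum_congr rfl fun j hj => ?_
  have hb : (rescale (-1) (exp ℝ)) ^ j = rescale (-(j:ℝ)) (exp ℝ) := by
    rw [← map_pow, exp_pow_eq_rescale_exp, rescale_rescale]
    norm_num
  have hmul : rescale (-(j:ℝ)) (exp ℝ) * rescale x (exp ℝ) = rescale (x - j) (exp ℝ) := by
    rw [exp_mul_exp_eq_exp_add]; ring_nf
  rw [neg_pow, hb]
  have hC : (PowerSeries.C (R := ℝ)) ((m.choose j : ℝ) * (-1) ^ j) =
      ((m.choose j : PowerSeries ℝ)) * (-1 : PowerSeries ℝ) ^ j := by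
    push_cast [map_mul, map_pow, map_natCast]
    simp
  rw [hC, ← hmul]
  ring

lemma coeff_pqLi_mul (p q : ℝ) (k : ℤ) (S T : PowerSeries ℝ)
    (hS : ∀ m i : ℕ, i < m → PowerSeries.coeff (R := ℝ) i (S ^ m) = 0) (n : ℕ) :
    PowerSeries.coeff (R := ℝ) n (pqLi p q k S * T) =
      ∑ m ∈ Finset.Icc 1 n, PowerSeries.coeff (R := ℝ) n (S ^ m * T) / pqInt p q m ^ k := by
  rw [PowerSeries.coeff_mul]
  have h1 : ∀ ij ∈ Finset.HasAntidiagonal.antidiagonal n,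
      PowerSeries.coeff (R := ℝ) ij.1 (pqLi p q k S) * PowerSeries.coeff (R := ℝ) ij.2 T =
      ∑ m ∈ Finset.Icc 1 n,
        (PowerSeries.coeff (R := ℝ) ij.1 (S ^ m) * PowerSeries.coeff (R := ℝ) ij.2 T) / pqInt p q m ^ k := by
    intro ij hij
    have hij1 : ij.1 ≤ n := Finset.HasAntidiagonal.antidiagonal.fst_le hij
    rw [pqLi, PowerSeries.coeff_mk]
    rw [Finset.sum_subset (Finset.Icc_subset_Icc_right hij1)
      (fun m hm hm' => by
        have : ij.1 < m := by
          simp only [Finset.mem_Icc] at hm hm'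
          omega
        rw [hS m ij.1 this, zero_div])]
    rw [Finset.sum_mul]
    exact Finset.sum_congr rfl fun m _ => by rw [div_mul_eq_mul_div]
  rw [Finset.sum_congr rfl h1, Finset.sum_comm]
  exact Finset.sum_congr rfl fun m _ => by
    rw [PowerSeries.coeff_mul, Finset.sum_div]

theorem pqPolyEuler_eq_sum_classical_euler
    (p q : ℝ) (hq : 0 < q) (hqp : q < p) (hp : p ≤ 1) (k : ℤ)
    (E : ℝ → ℕ → ℝ)
    (hE : ∀ x : ℝ,
      2 * pqLi p q k (1 - PowerSeries.rescale (-1) (PowerSeries.exp ℝ)) *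
          PowerSeries.rescale x (PowerSeries.exp ℝ) =
        (1 + PowerSeries.exp ℝ) * egf (E x))
    (Eul : ℝ → ℕ → ℝ)
    (hEul : ∀ x : ℝ,
      2 * PowerSeries.rescale x (PowerSeries.exp ℝ) =
        (PowerSeries.exp ℝ + 1) * egf (Eul x)) :
    ∀ (n : ℕ), 1 ≤ n → ∀ x : ℝ,
      (E x n =
        ∑ l ∈ Finset.range n, (1 / pqInt p q (l + 1) ^ k) *
          ∑ j ∈ Finset.range (l + 2),
            ((l + 1).choose j : ℝ) * (-1) ^ j * Eul (x - j) n) ∧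
      (∀ l : ℕ, n ≤ l →
        ∑ j ∈ Finset.range (l + 2),
          ((l + 1).choose j : ℝ) * (-1) ^ j * Eul (x - j) n = 0) := by
  intro n hn x
  set Xe := PowerSeries.exp ℝ with hXe
  set U : PowerSeries ℝ := 1 + Xe with hU
  have hU0 : PowerSeries.constantCoeff (R := ℝ) U ≠ 0 := by
    rw [hU, map_add, map_one, hXe, PowerSeries.constantCoeff_exp]
    norm_num
  have hUinv : U⁻¹ * U = 1 := PowerSeries.inv_mul_cancel U hU0
  have hfac : (n.factorial : ℝ) ≠ 0 := Nat.cast_ne_zero.mpr n.factorial_ne_zero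
  set F : ℕ → PowerSeries ℝ := fun m =>
    ∑ j ∈ Finset.range (m + 1),
      PowerSeries.C (R := ℝ) ((m.choose j : ℝ) * (-1) ^ j) * egf (Eul (x - j)) with hFdef
  set T : PowerSeries ℝ := 2 * PowerSeries.rescale x Xe with hT
  have hUF : ∀ m : ℕ, U * F m = pqAuxS ^ m * T := by
    intro m
    rw [hT, hXe, pqAuxS_pow_mul, hFdef, Finset.mul_sum]
    refine Finset.sum_congr rfl fun j hj => ?_
    have h := hEul (x - j)
    calc U * (PowerSeries.C (R := ℝ) ((m.choose j : ℝ) * (-1) ^ j) * egf (Eul (x - j)))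
        = PowerSeries.C (R := ℝ) ((m.choose j : ℝ) * (-1) ^ j) *
            ((PowerSeries.exp ℝ + 1) * egf (Eul (x - j))) := by rw [hU, hXe]; ring
      _ = PowerSeries.C (R := ℝ) ((m.choose j : ℝ) * (-1) ^ j) *
            (2 * PowerSeries.rescale (x - j) (PowerSeries.exp ℝ)) := by rw [← h]
  have hF : ∀ m : ℕ, F m = U⁻¹ * (pqAuxS ^ m * T) := by
    intro m
    calc F m = (U⁻¹ * U) * F m := by rw [hUinv, one_mul]
      _ = U⁻¹ * (U * F m) := by ring
      _ = U⁻¹ * (pqAuxS ^ m * T) := by rw [hUF]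
  have hFcoeff : ∀ l : ℕ,
      (n.factorial : ℝ) * PowerSeries.coeff (R := ℝ) n (F (l + 1)) =
        ∑ j ∈ Finset.range (l + 2),
          ((l + 1).choose j : ℝ) * (-1) ^ j * Eul (x - j) n := by
    intro l
    rw [hFdef]
    simp only [map_sum, PowerSeries.coeff_C_mul, egf, PowerSeries.coeff_mk]
    rw [Finset.mul_sum]
    refine Finset.sum_congr rfl fun j hj => ?_
    field_simp
  have hFzero : ∀ m : ℕ, n < m → PowerSeries.coeff (R := ℝ) n (F m) = 0 := by
    intro m hm
    rw [hF m]
    have hdvd : (PowerSeries.X : PowerSeries ℝ) ^ m ∣ U⁻¹ * (pqAuxS ^ m * T) :=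
      (pow_dvd_pow_of_dvd (PowerSeries.X_dvd_iff.mpr pqAuxS_const) m).trans
        ((dvd_mul_right _ _).trans (dvd_mul_left _ _))
    exact PowerSeries.X_pow_dvd_iff.mp hdvd n hm
  constructor
  · -- part 1
    have hEx := hE x
    rw [← pqAuxS_eq] at hEx
    have hegf : egf (E x) = pqLi p q k pqAuxS * (U⁻¹ * T) := by
      calc egf (E x) = (U⁻¹ * U) * egf (E x) := by rw [hUinv, one_mul]
        _ = U⁻¹ * (U * egf (E x)) := by ring
        _ = U⁻¹ * (2 * pqLi p q k pqAuxS * PowerSeries.rescale x Xe) := by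
            rw [← hEx]
        _ = pqLi p q k pqAuxS * (U⁻¹ * T) := by rw [hT]; ring
    have hkey : E x n / n.factorial =
        ∑ m ∈ Finset.Icc 1 n, PowerSeries.coeff (R := ℝ) n (F m) / pqInt p q m ^ k := by
      have h1 : PowerSeries.coeff (R := ℝ) n (egf (E x)) = E x n / n.factorial := by
        rw [egf, PowerSeries.coeff_mk]
      rw [← h1, hegf, coeff_pqLi_mul p q k pqAuxS (U⁻¹ * T) pqAuxS_pow_coeff n]
      refine Finset.sum_congr rfl fun m _ => ?_
      have : pqAuxS ^ m * (U⁻¹ * T) = F m := by rw [hF m]; ring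
      rw [this]
    have hE2 : E x n = (n.factorial : ℝ) *
        ∑ m ∈ Finset.Icc 1 n, PowerSeries.coeff (R := ℝ) n (F m) / pqInt p q m ^ k := by
      rw [← hkey, mul_div_cancel₀ _ hfac]
    rw [hE2, ← Finset.Ico_add_one_right_eq_Icc, Finset.sum_Ico_eq_sum_range]
    simp only [Nat.add_sub_cancel]
    rw [Finset.mul_sum]
    refine Finset.sum_congr rfl fun l hl => ?_
    rw [Nat.add_comm 1 l, ← hFcoeff l]
    ring
  · -- part 2
    intro l hl
    rw [← hFcoeff l, hFzero (l + 1) (by omega), mul_zero]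
end

section
/- For every integer n ≥ 0, every integer k, and every real x: E_{n,p,q}^{(k)}(x) = Σ_{l=0}^{n} Σ_{i=l}^{n} binom(n,i) · S_2(i,l) · E_{n−i,p,q}^{(k)} · (x)_l, where (x)_l = x(x−1)⋯(x−l+1) is the falling factorial with (x)_0 = 1 and E_{n−i,p,q}^{(k)} = E_{n−i,p,q}^{(k)}(0) are the (p,q)-poly-Euler numbers. -/
open Finset

/-- Stirling numbers of the second kind: the number of partitions of an
`n`-element set into `m` nonempty blocks. -/
def stirling2 : ℕ → ℕ → ℕ
  | 0, 0 => 1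
  | 0, _ + 1 => 0
  | _ + 1, 0 => 0
  | n + 1, m + 1 => (m + 1) * stirling2 n (m + 1) + stirling2 n m

lemma stirling2_eq_zero : ∀ {i l : ℕ}, i < l → stirling2 i l = 0 := by
  intro i
  induction i with
  | zero => intro l h; cases l with
    | zero => omega
    | succ m => rfl
  | succ n ih =>
    intro l h
    cases l with
    | zero => omega
    | succ m =>
      show (m + 1) * stirling2 n (m + 1) + stirling2 n m = 0
      rw [ih (by omega), ih (by omega), mul_zero]

lemma pow_eq_sum_stirling2 (x : ℝ) : ∀ i : ℕ,
    x ^ i = ∑ l ∈ range (i + 1), (stirling2 i l : ℝ) * ∏ j ∈ range l, (x - (j : ℝ)) := by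
  intro i
  induction i with
  | zero => simp [stirling2]
  | succ i ih =>
    set ff : ℕ → ℝ := fun l => ∏ j ∈ range l, (x - (j : ℝ)) with hff
    have hffs : ∀ l, ff (l + 1) = ff l * (x - l) := fun l => Finset.prod_range_succ _ _
    have hA : ∑ l ∈ range (i + 1), ((l : ℝ) + 1) * (stirling2 i (l + 1) : ℝ) * ff (l + 1)
        = ∑ l ∈ range (i + 1), (l : ℝ) * (stirling2 i l : ℝ) * ff l := by
      have h1 := Finset.sum_range_succ' (fun l => (l : ℝ) * (stirling2 i l : ℝ) * ff l) (i + 1)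
      have h2 := Finset.sum_range_succ (fun l => (l : ℝ) * (stirling2 i l : ℝ) * ff l) (i + 1)
      rw [h2] at h1
      rw [stirling2_eq_zero (by omega)] at h1
      simp only [Nat.cast_zero, Nat.cast_succ, zero_mul, mul_zero,
        add_zero, zero_add, Nat.cast_ofNat] at h1
      linarith [h1]
    have hrec : ∀ l, (stirling2 (i + 1) (l + 1) : ℝ)
        = ((l : ℝ) + 1) * (stirling2 i (l + 1) : ℝ) + (stirling2 i l : ℝ) := by
      intro l
      show (((l + 1) * stirling2 i (l + 1) + stirling2 i l : ℕ) : ℝ) = _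
      push_cast; ring
    rw [Finset.sum_range_succ' (fun l => (stirling2 (i + 1) l : ℝ) * ff l) (i + 1)]
    have h0 : (stirling2 (i + 1) 0 : ℝ) = 0 := by norm_num [stirling2]
    calc x ^ (i + 1) = x * x ^ i := by ring
      _ = ∑ l ∈ range (i + 1), (stirling2 i l : ℝ) * (x * ff l) := by
          rw [ih, Finset.mul_sum]; exact Finset.sum_congr rfl fun l _ => by ring
      _ = ∑ l ∈ range (i + 1), ((stirling2 i l : ℝ) * ff (l + 1)
            + (l : ℝ) * (stirling2 i l : ℝ) * ff l) := by
          refine Finset.sum_congr rfl fun l _ => ?_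
          rw [hffs]; ring
      _ = ∑ l ∈ range (i + 1), (stirling2 i l : ℝ) * ff (l + 1)
            + ∑ l ∈ range (i + 1), ((l : ℝ) + 1) * (stirling2 i (l + 1) : ℝ) * ff (l + 1) := by
          rw [Finset.sum_add_distrib, hA]
      _ = ∑ l ∈ range (i + 1), (stirling2 (i + 1) (l + 1) : ℝ) * ff (l + 1) := by
          rw [← Finset.sum_add_distrib]
          exact Finset.sum_congr rfl fun l _ => by rw [hrec]; ring
      _ = ∑ l ∈ range (i + 1), (stirling2 (i + 1) (l + 1) : ℝ) * ff (l + 1)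
            + (stirling2 (i + 1) 0 : ℝ) * ff 0 := by rw [h0]; ring

theorem pqPolyEuler_eq_sum_stirling2_fallingFactorial
    (p q : ℝ) (hq : 0 < q) (hqp : q < p) (hp : p ≤ 1) (k : ℤ)
    (E : ℝ → ℕ → ℝ)
    (hE : ∀ x : ℝ,
      2 * pqLi p q k (1 - PowerSeries.rescale (-1) (PowerSeries.exp ℝ)) *
          PowerSeries.rescale x (PowerSeries.exp ℝ) =
        (1 + PowerSeries.exp ℝ) * egf (E x)) :
    ∀ (n : ℕ) (x : ℝ),
      E x n =
        ∑ l ∈ Finset.range (n + 1), ∑ i ∈ Finset.Icc l n,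
          (n.choose i : ℝ) * (stirling2 i l : ℝ) * E 0 (n - i) *
            ∏ j ∈ Finset.range l, (x - (j : ℝ)) := by
  intro n x
  -- Step 1: egf (E x) = egf (E 0) * rescale x exp
  have hne : (1 + PowerSeries.exp ℝ) ≠ 0 := by
    intro h
    have := congrArg (PowerSeries.constantCoeff (R := ℝ)) h
    simp [PowerSeries.constantCoeff_exp] at this
  have h0 := hE 0
  rw [PowerSeries.rescale_zero] at h0
  simp only [RingHom.coe_comp, Function.comp_apply, PowerSeries.constantCoeff_exp,
    map_one, mul_one] at h0
  have hx := hE x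
  rw [h0] at hx
  have hegf : egf (E x) = egf (E 0) * PowerSeries.rescale x (PowerSeries.exp ℝ) := by
    apply mul_left_cancel₀ hne
    rw [← hx]; ring
  -- Step 2: coefficient extraction
  have hcoeff : ∀ m : ℕ, E x m = ∑ i ∈ range (m + 1),
      (m.choose i : ℝ) * x ^ (m - i) * E 0 i := by
    intro m
    have h1 : PowerSeries.coeff (R := ℝ) m (egf (E x)) = E x m / m.factorial := by
      simp [egf, PowerSeries.coeff_mk]
    have h2 : PowerSeries.coeff (R := ℝ) m (egf (E 0) * PowerSeries.rescale x (PowerSeries.exp ℝ))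
        = ∑ i ∈ range (m + 1), E 0 i / i.factorial * (x ^ (m - i) / (m - i).factorial) := by
      rw [PowerSeries.coeff_mul, Finset.Nat.sum_antidiagonal_eq_sum_range_succ_mk]
      refine Finset.sum_congr rfl fun i _ => ?_
      rw [PowerSeries.coeff_rescale, PowerSeries.coeff_exp, egf, PowerSeries.coeff_mk,
        map_div₀, map_one, map_natCast]
      ring
    have h3 : E x m / m.factorial
        = ∑ i ∈ range (m + 1), E 0 i / i.factorial * (x ^ (m - i) / (m - i).factorial) := by
      rw [← h1, ← h2, hegf]
    have hm : (m.factorial : ℝ) ≠ 0 := Nat.cast_ne_zero.mpr m.factorial_ne_zero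
    have h4 : E x m = (m.factorial : ℝ)
        * ∑ i ∈ range (m + 1), E 0 i / i.factorial * (x ^ (m - i) / (m - i).factorial) := by
      rw [← h3]; field_simp
    rw [h4, Finset.mul_sum]
    refine Finset.sum_congr rfl fun i hi => ?_
    have hi' : i ≤ m := by simpa using Nat.lt_succ_iff.mp (Finset.mem_range.mp hi)
    rw [Nat.cast_choose ℝ hi']
    have hif : (i.factorial : ℝ) ≠ 0 := Nat.cast_ne_zero.mpr i.factorial_ne_zero
    have hmif : ((m - i).factorial : ℝ) ≠ 0 := Nat.cast_ne_zero.mpr (m - i).factorial_ne_zero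
    field_simp
  -- Step 3: reflect, expand x^i via Stirling, swap sums
  have hrefl : E x n = ∑ i ∈ range (n + 1), (n.choose i : ℝ) * x ^ i * E 0 (n - i) := by
    rw [hcoeff n, ← Finset.sum_range_reflect]
    refine Finset.sum_congr rfl fun i hi => ?_
    have hi' : i ≤ n := Nat.lt_succ_iff.mp (Finset.mem_range.mp hi)
    simp only [Nat.add_sub_cancel]
    rw [Nat.choose_symm hi', Nat.sub_sub_self hi']
  rw [hrefl]
  have hpow : ∀ i ∈ range (n + 1), (n.choose i : ℝ) * x ^ i * E 0 (n - i)
      = ∑ l ∈ range (n + 1), (n.choose i : ℝ) * (stirling2 i l : ℝ) * E 0 (n - i) *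
          ∏ j ∈ range l, (x - (j : ℝ)) := by
    intro i hi
    have hi' : i ≤ n := Nat.lt_succ_iff.mp (Finset.mem_range.mp hi)
    have hx2 : x ^ i = ∑ l ∈ range (n + 1), (stirling2 i l : ℝ) * ∏ j ∈ range l, (x - (j : ℝ)) := by
      rw [pow_eq_sum_stirling2 x i]
      refine Finset.sum_subset (Finset.range_subset_range.mpr (by omega)) fun l _ hl => ?_
      rw [stirling2_eq_zero (by simpa using hl), Nat.cast_zero, zero_mul]
    rw [hx2, Finset.mul_sum, Finset.sum_mul]
    exact Finset.sum_congr rfl fun l _ => by ring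
  rw [Finset.sum_congr rfl hpow, Finset.sum_comm]
  refine Finset.sum_congr rfl fun l hl => ?_
  refine (Finset.sum_subset (fun i hi => Finset.mem_range.mpr
    (Nat.lt_succ_of_le (Finset.mem_Icc.mp hi).2)) fun i hi hni => ?_).symm
  have : i < l := by
    have h1 := Finset.mem_range.mp hi
    have h2 : ¬(l ≤ i ∧ i ≤ n) := fun hc => hni (Finset.mem_Icc.mpr hc)
    omega
  rw [stirling2_eq_zero this, Nat.cast_zero, mul_zero, zero_mul, zero_mul]
end
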